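/- In the independent-dropping model (particle sites chosen i.i.d. with distribution p, p(i) > 0 for all i ∈ V) on a finite connected graph, the induced Markov chain on profiles x satisfies inf_{x∈S} M^{|V|−1}(x, S₁) ≥ α where α = min_{i∈V} ∏_{j=1}^{|V|−1} p(a_j^{(i)}) > 0 and S₁ = {x^{(i)} : i ∈ V} is the finite set of profiles generated by the i-orderings. -/

import Mathlib

-- n-step transition probabilities of a kernel on a countable space.
open Classical in
noncomputable def mpow {S : Type*} (M : S → S → ℝ) : ℕ → S → S → ℝ
  | 0 => fun x y => if x = y then 1 else 0
  | (n + 1) => fun x y => ∑' z, mpow M n x z * M z y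

-- Adding a particle at `i` with screening, acting on (ℤ-valued) height profiles.
open Classical in
noncomputable def dropZ {V : Type*} [Fintype V] (G : SimpleGraph V) (i : V) (x : V → ℤ) :
    V → ℤ :=
  fun j => if j = i then
    (Finset.univ.filter fun k => k = i ∨ G.Adj i k).sup'
      ⟨i, by simp⟩ x + 1
  else x j

-- Profile seen from the maximum: subtract the maximal height.
noncomputable def normP {V : Type*} [Fintype V] [Nonempty V] (x : V → ℤ) : V → ℤ :=
  fun j => x j - Finset.univ.sup' Finset.univ_nonempty x

-- Transition matrix of the profile chain for independent droppings with law `p`.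
open Classical in
noncomputable def Mchain {V : Type*} [Fintype V] [Nonempty V] (G : SimpleGraph V)
    (p : V → ℝ) (x y : V → ℤ) : ℝ :=
  ∑ i : V, if y = normP (dropZ G i x) then p i else 0

-- The profile `x⁽ⁱ⁾` obtained by dropping particles along the `i`-ordering `ord i`
-- starting from a profile with maximum at `i`.
noncomputable def xprof {V : Type*} [Fintype V] [Nonempty V] (G : SimpleGraph V)
    (ord : V → Fin (Fintype.card V - 1) → V) (i : V) : V → ℤ :=
  normP ((List.ofFn (ord i)).foldl (fun x v => dropZ G v x) (fun _ => 0))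


section AuxLemmas
set_option linter.unusedSectionVars false
variable {V : Type*} [Fintype V] [Nonempty V]

lemma sup'_add_const (s : Finset V) (hs : s.Nonempty) (f : V → ℤ) (c : ℤ) :
    s.sup' hs (fun j => f j + c) = s.sup' hs f + c := by
  apply le_antisymm
  · exact Finset.sup'_le _ _ fun j hj => by have := Finset.le_sup' f hj; omega
  · have : s.sup' hs f ≤ s.sup' hs (fun j => f j + c) - c :=
      Finset.sup'_le _ _ fun j hj => le_sub_iff_add_le.mpr (Finset.le_sup' (fun j => f j + c) hj)
    omega

lemma dropZ_add_const (G : SimpleGraph V) (v : V) (x : V → ℤ) (c : ℤ) :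
    dropZ G v (fun j => x j + c) = fun j => dropZ G v x j + c := by
  funext j
  simp only [dropZ]
  split
  · exact (congrArg (· + 1) (sup'_add_const _ _ x c)).trans (by ring)
  · rfl

lemma normP_add_const (x : V → ℤ) (c : ℤ) : normP (fun j => x j + c) = normP x := by
  funext j
  simp only [normP, sup'_add_const]
  ring

lemma normP_dropZ_normP (G : SimpleGraph V) (v : V) (x : V → ℤ) :
    normP (dropZ G v (normP x)) = normP (dropZ G v x) := by
  have h : normP x = fun j => x j + (-(Finset.univ.sup' Finset.univ_nonempty x)) := by
    funext j; simp only [normP]; ring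
  rw [h, dropZ_add_const, normP_add_const]

lemma Mchain_nonneg (G : SimpleGraph V) (p : V → ℝ) (hp : ∀ i, 0 ≤ p i) (x y : V → ℤ) :
    0 ≤ Mchain G p x y := by
  apply Finset.sum_nonneg
  intro i _
  by_cases h : y = normP (dropZ G i x)
  · rw [if_pos h]; exact hp i
  · rw [if_neg h]

lemma le_Mchain (G : SimpleGraph V) (p : V → ℝ) (hp : ∀ i, 0 ≤ p i) (i : V) (x : V → ℤ) :
    p i ≤ Mchain G p x (normP (dropZ G i x)) := by
  classical
  have h := Finset.single_le_sum
    (f := fun i' => if normP (dropZ G i x) = normP (dropZ G i' x) then p i' else 0)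
    (fun j _ => by
      beta_reduce
      by_cases hc : normP (dropZ G i x) = normP (dropZ G j x)
      · rw [if_pos hc]; exact hp j
      · rw [if_neg hc])
    (Finset.mem_univ i)
  beta_reduce at h
  rw [if_pos rfl] at h
  simpa [Mchain] using h

lemma Mchain_ne_zero (G : SimpleGraph V) (p : V → ℝ) {x y : V → ℤ}
    (h : Mchain G p x y ≠ 0) : ∃ i, y = normP (dropZ G i x) := by
  simp only [Mchain] at h
  obtain ⟨i, _, hi⟩ := Finset.exists_ne_zero_of_sum_ne_zero h
  by_cases hc : y = normP (dropZ G i x)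
  · exact ⟨i, hc⟩
  · rw [if_neg hc] at hi; exact absurd rfl hi

lemma mpow_nonneg {S : Type*} (M : S → S → ℝ) (hM : ∀ x y, 0 ≤ M x y) :
    ∀ n x y, 0 ≤ mpow M n x y
  | 0, x, y => by
      simp only [mpow]; split
      · exact zero_le_one
      · exact le_refl 0
  | (n+1), x, y => by
      simp only [mpow]
      exact tsum_nonneg fun z => mul_nonneg (mpow_nonneg M hM n x z) (hM z y)

lemma mpow_support_finite (G : SimpleGraph V) (p : V → ℝ) :
    ∀ (n : ℕ) (x : V → ℤ), {y | mpow (Mchain G p) n x y ≠ 0}.Finite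
  | 0, x => by
      apply (Set.finite_singleton x).subset
      intro y hy
      simp only [Set.mem_setOf_eq, mpow] at hy
      by_cases h : x = y
      · simp [h]
      · rw [if_neg h] at hy; exact absurd rfl hy
  | (n+1), x => by
      have ih := mpow_support_finite G p n x
      apply (ih.biUnion (fun z _ => Set.finite_range (fun i : V => normP (dropZ G i z)))).subset
      intro y hy
      simp only [Set.mem_setOf_eq, mpow] at hy
      have hex : ∃ z, mpow (Mchain G p) n x z * Mchain G p z y ≠ 0 := by
        by_contra hall
        push_neg at hall
        apply hy
        calc (∑' z, mpow (Mchain G p) n x z * Mchain G p z y) = ∑' (_ : V → ℤ), (0:ℝ) :=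
              tsum_congr hall
          _ = 0 := tsum_zero
      obtain ⟨z, hz⟩ := hex
      have h1 : mpow (Mchain G p) n x z ≠ 0 := left_ne_zero_of_mul hz
      have h2 : Mchain G p z y ≠ 0 := right_ne_zero_of_mul hz
      obtain ⟨i, hi⟩ := Mchain_ne_zero G p h2
      exact Set.mem_biUnion h1 ⟨i, hi.symm⟩

lemma chain_le (G : SimpleGraph V) (p : V → ℝ) (hp : ∀ i, 0 ≤ p i) :
    ∀ (L : List V) (x : V → ℤ), normP x = x →
      (L.map p).prod ≤ mpow (Mchain G p) L.length x
        (normP (L.foldl (fun y v => dropZ G v y) x)) := by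
  intro L
  induction L using List.reverseRecOn with
  | nil =>
      intro x hx
      simp [mpow, hx]
  | append_singleton L v ih =>
      intro x hx
      have hfold : (L ++ [v]).foldl (fun y v => dropZ G v y) x
          = dropZ G v (L.foldl (fun y v => dropZ G v y) x) := by
        simp [List.foldl_append]
      set z₀ := normP (L.foldl (fun y v => dropZ G v y) x) with hz₀
      have hy : normP ((L ++ [v]).foldl (fun y v => dropZ G v y) x)
          = normP (dropZ G v z₀) := by
        rw [hfold, hz₀, normP_dropZ_normP]
      rw [hy]
      have hlen : (L ++ [v]).length = L.length + 1 := by simp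
      rw [hlen]
      simp only [mpow]
      set y := normP (dropZ G v z₀) with hydef
      have hsum : Summable (fun z => mpow (Mchain G p) L.length x z * Mchain G p z y) := by
        have hfin := mpow_support_finite G p L.length x
        apply summable_of_ne_finset_zero (s := hfin.toFinset)
        intro b hb
        have hb0 : mpow (Mchain G p) L.length x b = 0 := by
          by_contra h
          exact hb (hfin.mem_toFinset.mpr h)
        rw [hb0, zero_mul]
      have hMn : ∀ x' y', 0 ≤ Mchain G p x' y' := Mchain_nonneg G p hp
      have hterm : ((L ++ [v]).map p).prod
          ≤ mpow (Mchain G p) L.length x z₀ * Mchain G p z₀ y := by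
        have h1 : ((L ++ [v]).map p).prod = (L.map p).prod * p v := by simp
        rw [h1]
        exact mul_le_mul (ih x hx) (le_Mchain G p hp v z₀) (hp v)
          (mpow_nonneg _ hMn _ _ _)
      exact le_trans hterm (Summable.le_tsum hsum z₀ (fun j _ =>
        mul_nonneg (mpow_nonneg _ hMn _ _ _) (hMn _ _)))


lemma inv_lemma (G : SimpleGraph V) (ord : V → Fin (Fintype.card V - 1) → V)
    (hord : ∀ i k, ∃ j, (j = i ∨ ∃ l, l < k ∧ ord i l = j) ∧ G.Adj (ord i k) j)
    (i : V) (x : V → ℤ) (hx0 : ∀ j, x j ≤ 0) (hxi : x i = 0) :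
    ∀ k : ℕ, k ≤ Fintype.card V - 1 → ∀ v : V,
      ((v = i ∨ ∃ l : Fin (Fintype.card V - 1), (l : ℕ) < k ∧ ord i l = v) →
        (((List.ofFn (ord i)).take k).foldl (fun y w => dropZ G w y) x v =
          ((List.ofFn (ord i)).take k).foldl (fun y w => dropZ G w y) (fun _ => 0) v ∧
         0 ≤ ((List.ofFn (ord i)).take k).foldl (fun y w => dropZ G w y) x v)) ∧
      (¬(v = i ∨ ∃ l : Fin (Fintype.card V - 1), (l : ℕ) < k ∧ ord i l = v) →
        (((List.ofFn (ord i)).take k).foldl (fun y w => dropZ G w y) x v = x v ∧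
         ((List.ofFn (ord i)).take k).foldl (fun y w => dropZ G w y) (fun _ => 0) v = 0)) := by
  intro k
  induction k with
  | zero =>
      intro _ v
      simp only [List.take_zero, List.foldl_nil]
      constructor
      · rintro (rfl | ⟨l, hl, _⟩)
        · exact ⟨by simp [hxi], by simp [hxi]⟩
        · omega
      · intro _; exact ⟨by simp, by simp⟩
  | succ k ih =>
      intro hk1 v
      have hk : k < Fintype.card V - 1 := hk1
      have IH := ih (le_of_lt hk)
      set f : (V → ℤ) → V → (V → ℤ) := fun y w => dropZ G w y with hf
      set L := List.ofFn (ord i) with hL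
      have hLlen : L.length = Fintype.card V - 1 := by simp [hL]
      set yk := (L.take k).foldl f x with hyk
      set zk := (L.take k).foldl f (fun _ => 0) with hzk
      set vk := ord i ⟨k, hk⟩ with hvk
      have htake : L.take (k+1) = L.take k ++ [vk] := by
        rw [← List.take_concat_get (by omega : k < L.length)]
        simp [hL, hvk, List.concat_eq_append]
      have hstep : ∀ w : V → ℤ, (L.take (k+1)).foldl f w = dropZ G vk ((L.take k).foldl f w) := by
        intro w
        rw [htake, List.foldl_append]
        rfl
      -- the determined witness adjacent to vk
      obtain ⟨j, hj1, hj2⟩ := hord i ⟨k, hk⟩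
      have hjdet : j = i ∨ ∃ l : Fin (Fintype.card V - 1), (l : ℕ) < k ∧ ord i l = j := by
        rcases hj1 with h | ⟨l, hl, hlj⟩
        · exact Or.inl h
        · exact Or.inr ⟨l, by exact_mod_cast hl, hlj⟩
      have hjy := (IH j).1 hjdet
      -- the neighborhood finset
      classical
      have hsups : ∀ (N : Finset V) (hN : N.Nonempty), j ∈ N →
          (∀ u ∈ N, u = vk ∨ G.Adj vk u) →
          N.sup' hN yk = N.sup' hN zk ∧ 0 ≤ N.sup' hN yk := by
        intro N hN hjN _
        have hyz : ∀ u, (u = i ∨ ∃ l : Fin (Fintype.card V - 1), (l : ℕ) < k ∧ ord i l = u)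
            → yk u = zk u ∧ 0 ≤ yk u := fun u hu => (IH u).1 hu
        have hun : ∀ u, ¬(u = i ∨ ∃ l : Fin (Fintype.card V - 1), (l : ℕ) < k ∧ ord i l = u)
            → yk u = x u ∧ zk u = 0 := fun u hu => (IH u).2 hu
        have h0j : 0 ≤ yk j := hjy.2
        have hjz : yk j = zk j := hjy.1
        constructor
        · apply le_antisymm
          · apply Finset.sup'_le
            intro u hu
            by_cases hd : u = i ∨ ∃ l : Fin (Fintype.card V - 1), (l : ℕ) < k ∧ ord i l = u
            · rw [(hyz u hd).1]; exact Finset.le_sup' _ hu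
            · calc yk u = x u := (hun u hd).1
                _ ≤ 0 := hx0 u
                _ ≤ zk j := hjz ▸ h0j
                _ ≤ N.sup' hN zk := Finset.le_sup' _ hjN
          · apply Finset.sup'_le
            intro u hu
            by_cases hd : u = i ∨ ∃ l : Fin (Fintype.card V - 1), (l : ℕ) < k ∧ ord i l = u
            · rw [← (hyz u hd).1]; exact Finset.le_sup' _ hu
            · calc zk u = 0 := (hun u hd).2
                _ ≤ yk j := h0j
                _ ≤ N.sup' hN yk := Finset.le_sup' _ hjN
        · exact le_trans h0j (Finset.le_sup' _ hjN)
      -- apply to the dropZ finset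
      have hvkval : ∀ w : V → ℤ, dropZ G vk w vk =
          (Finset.univ.filter fun u => u = vk ∨ G.Adj vk u).sup'
            ⟨vk, by simp⟩ w + 1 := by
        intro w; simp [dropZ]
      have hvkother : ∀ (w : V → ℤ) (u : V), u ≠ vk → dropZ G vk w u = w u := by
        intro w u hu; simp [dropZ, hu]
      have hjN : j ∈ Finset.univ.filter fun u => u = vk ∨ G.Adj vk u := by
        simp only [Finset.mem_filter, Finset.mem_univ, true_and]
        exact Or.inr hj2
      have hmemN : ∀ u ∈ Finset.univ.filter fun u => u = vk ∨ G.Adj vk u, u = vk ∨ G.Adj vk u := by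
        intro u hu
        simpa using (Finset.mem_filter.mp hu).2
      obtain ⟨hsupeq, hsup0⟩ := hsups _ ⟨vk, by simp⟩ hjN hmemN
      constructor
      · -- determined at k+1
        intro hdet
        rw [hstep x, hstep (fun _ => 0)]
        by_cases hv : v = vk
        · subst hv
          rw [hvkval yk, hvkval zk, hsupeq]
          exact ⟨rfl, by omega⟩
        · have hdetk : v = i ∨ ∃ l : Fin (Fintype.card V - 1), (l : ℕ) < k ∧ ord i l = v := by
            rcases hdet with h | ⟨l, hl, hlv⟩
            · exact Or.inl h
            · rcases Nat.lt_succ_iff_lt_or_eq.mp hl with hlk | hlk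
              · exact Or.inr ⟨l, hlk, hlv⟩
              · exfalso
                apply hv
                rw [← hlv, hvk]
                congr 1
                exact Fin.ext hlk
          rw [hvkother yk v hv, hvkother zk v hv]
          exact (IH v).1 hdetk
      · -- undetermined at k+1
        intro hund
        have hv : v ≠ vk := by
          intro hv
          exact hund (Or.inr ⟨⟨k, hk⟩, Nat.lt_succ_self k, hv.symm⟩)
        have hundk : ¬(v = i ∨ ∃ l : Fin (Fintype.card V - 1), (l : ℕ) < k ∧ ord i l = v) := by
          intro hd
          apply hund
          rcases hd with h | ⟨l, hl, hlv⟩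
          · exact Or.inl h
          · exact Or.inr ⟨l, Nat.lt_succ_of_lt hl, hlv⟩
        rw [hstep x, hstep (fun _ => 0), hvkother _ v hv, hvkother _ v hv]
        exact (IH v).2 hundk


end AuxLemmas

open Classical in
/-- In the independent-dropping model, the profile chain enters the finite set
`S₁ = {x⁽ⁱ⁾ : i ∈ V}` in `|V| − 1` steps with probability at least
`α = min_i ∏_j p(a_j⁽ⁱ⁾) > 0`, uniformly in the starting profile. -/
theorem stmt13 {V : Type*} [Fintype V] [DecidableEq V] [Nonempty V] (G : SimpleGraph V)
    (hconn : G.Connected)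
    (p : V → ℝ) (hp : ∀ i, 0 < p i) (hp1 : ∑ i : V, p i = 1)
    (ord : V → Fin (Fintype.card V - 1) → V)
    (hinj : ∀ i, Function.Injective (ord i))
    (hrange : ∀ i, Set.range (ord i) = {i}ᶜ)
    (hord : ∀ i k, ∃ j, (j = i ∨ ∃ l, l < k ∧ ord i l = j) ∧ G.Adj (ord i k) j) :
    0 < Finset.univ.inf' Finset.univ_nonempty (fun i : V => ∏ j, p (ord i j)) ∧
    ∀ x : V → ℤ, (∀ j, x j ≤ 0) → (∃ j, x j = 0) →
      Finset.univ.inf' Finset.univ_nonempty (fun i : V => ∏ j, p (ord i j)) ≤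
        ∑ y ∈ Finset.univ.image (fun i => xprof G ord i),
          mpow (Mchain G p) (Fintype.card V - 1) x y := by
  have hMn : ∀ x' y', 0 ≤ Mchain G p x' y' := Mchain_nonneg G p (fun i => (hp i).le)
  constructor
  · rw [Finset.lt_inf'_iff]
    intro i _
    exact Finset.prod_pos fun j _ => hp _
  · intro x hx0 hxmax
    obtain ⟨i, hxi⟩ := hxmax
    have hsupx : Finset.univ.sup' Finset.univ_nonempty x = 0 :=
      le_antisymm (Finset.sup'_le _ _ fun j _ => hx0 j)
        (hxi ▸ Finset.le_sup' x (Finset.mem_univ i))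
    have hnormx : normP x = x := by
      funext j; simp [normP, hsupx]
    have key := chain_le G p (fun i => (hp i).le) (List.ofFn (ord i)) x hnormx
    rw [List.length_ofFn] at key
    have hprod : ((List.ofFn (ord i)).map p).prod = ∏ j, p (ord i j) := by
      rw [List.map_ofFn, List.prod_ofFn]; rfl
    rw [hprod] at key
    have hfold : (List.ofFn (ord i)).foldl (fun y w => dropZ G w y) x
        = (List.ofFn (ord i)).foldl (fun y w => dropZ G w y) (fun _ => 0) := by
      funext v
      have hinvv := inv_lemma G ord hord i x hx0 hxi (Fintype.card V - 1) le_rfl v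
      have hdet : v = i ∨ ∃ l : Fin (Fintype.card V - 1),
          (l : ℕ) < Fintype.card V - 1 ∧ ord i l = v := by
        by_cases hvi : v = i
        · exact Or.inl hvi
        · right
          have hv : v ∈ Set.range (ord i) := by
            rw [hrange i]; exact hvi
          obtain ⟨l, hl⟩ := hv
          exact ⟨l, l.isLt, hl⟩
      have h := (hinvv.1 hdet).1
      have htk : (List.ofFn (ord i)).take (Fintype.card V - 1) = List.ofFn (ord i) := by
        apply List.take_of_length_le
        simp
      rw [htk] at h
      exact h
    have hxprof : normP ((List.ofFn (ord i)).foldl (fun y w => dropZ G w y) x)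
        = xprof G ord i := by
      rw [hfold]; rfl
    rw [hxprof] at key
    refine le_trans (Finset.inf'_le _ (Finset.mem_univ i)) (le_trans key ?_)
    exact Finset.single_le_sum (f := fun y => mpow (Mchain G p) (Fintype.card V - 1) x y)
      (fun y _ => mpow_nonneg _ hMn _ _ _)
      (Finset.mem_image_of_mem _ (Finset.mem_univ i))
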